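/- Let g = su(2) ⊕ ℝ with dual basis as above (de¹ = −e²³ etc., de⁴ = 0), let m ∈ ℤ, and suppose left-invariant 1-forms η⁰ = μ₁e¹ + μ₄e⁴ (μ₁ ≠ 0), η¹ = a₁e¹ + a₄e⁴ (a₄ ≠ 0), η² = h e², η³ = k e³ (h,k > 0) satisfy dη⁰ = −2η²∧η³, d(η³∧η¹) = 3η⁰∧η¹∧η² + m e⁴∧η¹∧η², d(η¹∧η²) = −3η⁰∧η³∧η¹ − m e⁴∧η³∧η¹. Then k = h, μ₁ = 2h², and 3a₁μ₄ = 6h²a₄ − a₄ − a₁m. -/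

import Mathlib

/-! Invariant forms on the Lie algebra `g = su(2) ⊕ ℝ`, in coordinates:
`1`-forms in the basis `e¹,…,e⁴` (indices `0,…,3`), `2`-forms in the basis
`e¹²,e¹³,e¹⁴,e²³,e²⁴,e³⁴`, `3`-forms in the basis `e¹²³,e¹²⁴,e¹³⁴,e²³⁴`.
The Chevalley–Eilenberg differential is determined by `de¹ = −e²³`,
`de² = −e³¹`, `de³ = −e¹²`, `de⁴ = 0` and the Leibniz rule. -/

abbrev One4 : Type := Fin 4 → ℝ

/-- wedge product `Λ¹ × Λ¹ → Λ²`. -/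
def wedge11 (a b : One4) : Fin 6 → ℝ :=
  ![a 0 * b 1 - a 1 * b 0, a 0 * b 2 - a 2 * b 0, a 0 * b 3 - a 3 * b 0,
    a 1 * b 2 - a 2 * b 1, a 1 * b 3 - a 3 * b 1, a 2 * b 3 - a 3 * b 2]

/-- wedge product `Λ¹ × Λ² → Λ³`. -/
def wedge12 (a : One4) (ω : Fin 6 → ℝ) : Fin 4 → ℝ :=
  ![a 0 * ω 3 - a 1 * ω 1 + a 2 * ω 0,
    a 0 * ω 4 - a 1 * ω 2 + a 3 * ω 0,
    a 0 * ω 5 - a 2 * ω 2 + a 3 * ω 1,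
    a 1 * ω 5 - a 2 * ω 4 + a 3 * ω 3]

/-- Chevalley–Eilenberg differential on `1`-forms. -/
def dOne (a : One4) : Fin 6 → ℝ :=
  ![-a 2, a 1, 0, -a 0, 0, 0]

/-- Chevalley–Eilenberg differential on `2`-forms. -/
def dTwo (ω : Fin 6 → ℝ) : Fin 4 → ℝ :=
  ![0, -ω 5, ω 4, -ω 2]

/-- Proposition 4.1, second case: if the invariant `1`-forms
`η⁰ = μ₁e¹ + μ₄e⁴` (`μ₁ ≠ 0`), `η¹ = a₁e¹ + a₄e⁴` (`a₄ ≠ 0`), `η² = he²`,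
`η³ = ke³` (`h, k > 0`) satisfy `dη⁰ = −2η²∧η³`,
`d(η³∧η¹) = 3η⁰∧η¹∧η² + m e⁴∧η¹∧η²` and
`d(η¹∧η²) = −3η⁰∧η³∧η¹ − m e⁴∧η³∧η¹`, then `k = h`, `μ₁ = 2h²` and
`3a₁μ₄ = 6h²a₄ − a₄ − a₁m`. -/
theorem stmt_13 (m : ℤ) (μ₁ μ₄ a₁ a₄ h k : ℝ)
    (hμ₁ : μ₁ ≠ 0) (ha₄ : a₄ ≠ 0) (hh : 0 < h) (hk : 0 < k)
    (η0 η1 η2 η3 : One4)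
    (hη0 : η0 = μ₁ • (Pi.single 0 1 : One4) + μ₄ • (Pi.single 3 1 : One4))
    (hη1 : η1 = a₁ • (Pi.single 0 1 : One4) + a₄ • (Pi.single 3 1 : One4))
    (hη2 : η2 = h • (Pi.single 1 1 : One4))
    (hη3 : η3 = k • (Pi.single 2 1 : One4))
    (heq0 : dOne η0 = (-2 : ℝ) • wedge11 η2 η3)
    (heq31 : dTwo (wedge11 η3 η1)
      = (3 : ℝ) • wedge12 η0 (wedge11 η1 η2)
        + (m : ℝ) • wedge12 (Pi.single 3 1 : One4) (wedge11 η1 η2))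
    (heq12 : dTwo (wedge11 η1 η2)
      = (-3 : ℝ) • wedge12 η0 (wedge11 η3 η1)
        - (m : ℝ) • wedge12 (Pi.single 3 1 : One4) (wedge11 η3 η1)) :
    k = h ∧ μ₁ = 2 * h ^ 2 ∧ 3 * a₁ * μ₄ = 6 * h ^ 2 * a₄ - a₄ - a₁ * m := by
  subst hη0 hη1 hη2 hη3
  have e0a := congrFun heq0 3
  have e1a := congrFun heq31 1
  have e2a := congrFun heq12 2
  simp only [dOne, dTwo, wedge11, wedge12, Pi.single, Function.update, Pi.add_apply,
    Pi.smul_apply, smul_eq_mul, Matrix.cons_val_zero, Matrix.cons_val_one,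
    Matrix.head_cons] at e0a e1a e2a
  norm_num [show ((3:Fin 4):ℕ) = 3 from rfl, show ((2:Fin 4):ℕ) = 2 from rfl,
    show ((1:Fin 4):ℕ) = 1 from rfl, Fin.ext_iff] at e0a e1a e2a
  rw [show (![0, -(k * a₁), 0, 0, 0, k * a₄] : Fin 6 → ℝ) 5 = k * a₄ from rfl] at e1a e2a
  dsimp [Matrix.vecCons, Fin.cons, Fin.cases, Fin.induction, Fin.induction.go] at e0a e1a e2a
  rw [neg_inj] at e0a
  set X : ℝ := 3 * a₁ * μ₄ - 3 * μ₁ * a₄ + a₁ * m with hX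
  have h1 : h * X = -(k * a₄) := by rw [hX]; linear_combination -e1a
  have h2 : k * X = -(h * a₄) := by rw [hX]; linear_combination -e2a
  have hXne : X ≠ 0 := by
    intro h0
    rw [h0, mul_zero] at h1
    exact ha₄ (by nlinarith [hk])
  have hkh : k = h := by
    have key : (h - k) * ((h + k) * X) = 0 := by linear_combination h * h1 - k * h2
    rcases mul_eq_zero.mp key with h' | h'
    · linarith
    · rcases mul_eq_zero.mp h' with h'' | h''
      · linarith
      · exact absurd h'' hXne
  have hμ : μ₁ = 2 * h ^ 2 := by rw [e0a, hkh]; ring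
  refine ⟨hkh, hμ, ?_⟩
  have hXa : X = -a₄ :=
    mul_left_cancel₀ (ne_of_gt hh) (by rw [h1, hkh]; ring)
  rw [hX] at hXa
  linear_combination hXa + 3 * a₄ * hμ
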